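/- Let L/K be a finite extension of a perfect field K with Galois closure L̃ and G = Gal(L̃/K). If G has fewer than two proper nontrivial normal subgroups, then L/K is general primitive. In particular, if G is simple then L/K is general primitive. -/

import Mathlib

open IntermediateField Module

section Defs

variable (K Kbar : Type*) [Field K] [Field Kbar] [Algebra K Kbar]

/-- The Galois closure inside the ambient field `Kbar` of an intermediate field `L` of
`Kbar / K`: the compositum of all the `K`-conjugates of `L` in `Kbar`. -/
noncomputable def galClosure (L : IntermediateField K Kbar) : IntermediateField K Kbar :=
  ⨆ f : ↥L →ₐ[K] Kbar, f.fieldRange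

/-- The subgroup `H = Gal(L̃/L)` of `G = Gal(L̃/K)`. -/
noncomputable def fixSub (L : IntermediateField K Kbar) :
    Subgroup (↥(galClosure K Kbar L) ≃ₐ[K] ↥(galClosure K Kbar L)) :=
  (IntermediateField.comap (galClosure K Kbar L).val L).fixingSubgroup

/-- The cluster size `r_K(L) = [N_G(H) : H]`. -/
noncomputable def clusterSize (L : IntermediateField K Kbar) : ℕ :=
  (fixSub K Kbar L).relIndex (Subgroup.normalizer (fixSub K Kbar L : Set (↥(galClosure K Kbar L) ≃ₐ[K] ↥(galClosure K Kbar L))))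

/-- The number of clusters `s_K(L) = [G : N_G(H)]`. -/
noncomputable def numClusters (L : IntermediateField K Kbar) : ℕ :=
  (Subgroup.normalizer (fixSub K Kbar L : Set (↥(galClosure K Kbar L) ≃ₐ[K] ↥(galClosure K Kbar L)))).index

/-- The ascending index `t_K(L) = [G : H^G]`. -/
noncomputable def ascIndex (L : IntermediateField K Kbar) : ℕ :=
  (Subgroup.normalClosure (fixSub K Kbar L :
      Set (↥(galClosure K Kbar L) ≃ₐ[K] ↥(galClosure K Kbar L)))).index

/-- The quantity `u_K(L) = [H^G : H]`. -/
noncomputable def uIndex (L : IntermediateField K Kbar) : ℕ :=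
  (fixSub K Kbar L).relIndex (Subgroup.normalClosure (fixSub K Kbar L :
      Set (↥(galClosure K Kbar L) ≃ₐ[K] ↥(galClosure K Kbar L))))

/-- `M/K` is obtained by strong cluster magnification from `L/K` through `F/K`. -/
def IsSCMvia (M L F : IntermediateField K Kbar) : Prop :=
  L ≤ M ∧ 2 < Module.finrank K ↥L ∧ FiniteDimensional K ↥F ∧ IsGalois K ↥F ∧
    galClosure K Kbar L ⊓ F = ⊥ ∧ L ⊔ F = M

/-- `M/K` is primitive: it is not obtained by a nontrivial strong cluster magnification
from any subextension over `K`. -/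
def IsPrimitive (M : IntermediateField K Kbar) : Prop :=
  ¬ ∃ L F : IntermediateField K Kbar, IsSCMvia K Kbar M L F ∧ F ≠ ⊥

/-- `M/K` is obtained by strong general magnification from `L/K` through `J/K`. -/
def IsSGMvia (M L J : IntermediateField K Kbar) : Prop :=
  L ≤ M ∧ 1 < Module.finrank K ↥L ∧ FiniteDimensional K ↥J ∧
    galClosure K Kbar L ⊓ galClosure K Kbar J = ⊥ ∧ L ⊔ J = M

/-- `M/K` is general primitive: not obtained by a nontrivial strong general magnification
from any subextension over `K`. -/
def IsGeneralPrimitive (M : IntermediateField K Kbar) : Prop :=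
  ¬ ∃ L J : IntermediateField K Kbar, IsSGMvia K Kbar M L J ∧ J ≠ ⊥

/-- `F/E` is a Galois pair of intermediate fields: `E ≤ F` and `F/E` is Galois. -/
def IsGaloisPair (E F : IntermediateField K Kbar) : Prop :=
  ∃ h : E ≤ F, IsGalois ↥E ↥(IntermediateField.extendScalars h)

/-- One step of the unique descending chain: `N'` is an intermediate field of `N/K` such
that `N/N'` is Galois of maximal possible degree. -/
def DescStep (N N' : IntermediateField K Kbar) : Prop :=
  N' ≤ N ∧ IsGaloisPair K Kbar N' N ∧
    ∀ N'' : IntermediateField K Kbar, N'' ≤ N → IsGaloisPair K Kbar N'' N →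
      Module.finrank K ↥N' ≤ Module.finrank K ↥N''

/-- One step of the unique ascending chain for `L/K`: `F'` is an intermediate field of
`L/F` such that `F'/F` is Galois of maximal possible degree. -/
def AscStep (L F F' : IntermediateField K Kbar) : Prop :=
  F ≤ F' ∧ F' ≤ L ∧ IsGaloisPair K Kbar F F' ∧
    ∀ F'' : IntermediateField K Kbar, F ≤ F'' → F'' ≤ L → IsGaloisPair K Kbar F F'' →
      Module.finrank K ↥F'' ≤ Module.finrank K ↥F'

/-- `E` occurs in the unique descending chain of `L/K`. -/
def InDescChain (L E : IntermediateField K Kbar) : Prop :=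
  Relation.ReflTransGen (DescStep K Kbar) L E

/-- `E` occurs in the unique ascending chain of `L/K`. -/
def InAscChain (L E : IntermediateField K Kbar) : Prop :=
  Relation.ReflTransGen (AscStep K Kbar L) ⊥ E

end Defs

/-- Let `L/K` be a finite extension of a perfect field `K` with Galois
closure `L̃` and `G = Gal(L̃/K)`.  If `G` has fewer than two proper nontrivial normal
subgroups, then `L/K` is general primitive.  In particular, if `G` is simple then `L/K` is
general primitive. -/
theorem general_primitive_of_few_normal_subgroups
    (K Kbar : Type*) [Field K] [PerfectField K] [Field Kbar] [Algebra K Kbar]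
    [IsAlgClosure K Kbar]
    (L : IntermediateField K Kbar) [FiniteDimensional K ↥L] :
    ((∀ N₁ N₂ : Subgroup (↥(galClosure K Kbar L) ≃ₐ[K] ↥(galClosure K Kbar L)),
        N₁.Normal → N₂.Normal → N₁ ≠ ⊥ → N₁ ≠ ⊤ → N₂ ≠ ⊥ → N₂ ≠ ⊤ → N₁ = N₂) →
      IsGeneralPrimitive K Kbar L) ∧
    (IsSimpleGroup (↥(galClosure K Kbar L) ≃ₐ[K] ↥(galClosure K Kbar L)) →
      IsGeneralPrimitive K Kbar L) := by
  have main : (∀ N₁ N₂ : Subgroup (↥(galClosure K Kbar L) ≃ₐ[K] ↥(galClosure K Kbar L)),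
        N₁.Normal → N₂.Normal → N₁ ≠ ⊥ → N₁ ≠ ⊤ → N₂ ≠ ⊥ → N₂ ≠ ⊤ → N₁ = N₂) →
      IsGeneralPrimitive K Kbar L := by
    intro hfew
    rintro ⟨L', J, ⟨hL'L, hrank, hJfin, hinf, hsup⟩, hJne⟩
    set T : IntermediateField K Kbar := galClosure K Kbar L with hTdef
    have hJL : J ≤ L := by rw [← hsup]; exact le_sup_right
    haveI : FiniteDimensional K ↥L' :=
      FiniteDimensional.of_injective (IntermediateField.inclusion hL'L).toLinearMap
        (IntermediateField.inclusion_injective hL'L)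
    haveI : FiniteDimensional K ↥T := normalClosure.is_finiteDimensional K (↥L) Kbar
    haveI : Normal K ↥T := normalClosure.normal K (↥L) Kbar
    haveI : IsGalois K ↥T := ⟨⟩
    set Eg : IntermediateField K Kbar := galClosure K Kbar L' with hEgdef
    set Fg : IntermediateField K Kbar := galClosure K Kbar J with hFgdef
    haveI : FiniteDimensional K ↥Eg := normalClosure.is_finiteDimensional K (↥L') Kbar
    haveI : FiniteDimensional K ↥Fg := normalClosure.is_finiteDimensional K (↥J) Kbar
    haveI : Normal K ↥Eg := normalClosure.normal K (↥L') Kbar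
    haveI : Normal K ↥Fg := normalClosure.normal K (↥J) Kbar
    haveI : IsGalois K ↥Eg := ⟨⟩
    haveI : IsGalois K ↥Fg := ⟨⟩
    have hEgT : Eg ≤ T := IntermediateField.normalClosure_mono L' L hL'L
    have hFgT : Fg ≤ T := IntermediateField.normalClosure_mono J L hJL
    set E : IntermediateField K ↥T := IntermediateField.comap T.val Eg with hEdef
    set F : IntermediateField K ↥T := IntermediateField.comap T.val Fg with hFdef
    have hmapE : E.map T.val = Eg :=
      IntermediateField.map_comap_eq_self (by rwa [IntermediateField.fieldRange_val])
    have hmapF : F.map T.val = Fg :=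
      IntermediateField.map_comap_eq_self (by rwa [IntermediateField.fieldRange_val])
    haveI : IsGalois K ↥E :=
      IsGalois.of_algEquiv ((IntermediateField.equivMap E T.val).trans
        (IntermediateField.equivOfEq hmapE)).symm
    haveI : IsGalois K ↥F :=
      IsGalois.of_algEquiv ((IntermediateField.equivMap F T.val).trans
        (IntermediateField.equivOfEq hmapF)).symm
    -- E ⊓ F = ⊥
    have hcbot : IntermediateField.comap T.val (⊥ : IntermediateField K Kbar) =
        (⊥ : IntermediateField K ↥T) := by
      ext x
      constructor
      · rintro hx
        obtain ⟨k, hk⟩ := IntermediateField.mem_bot.mp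
          (show T.val x ∈ (⊥ : IntermediateField K Kbar) from hx)
        refine IntermediateField.mem_bot.mpr ⟨k, ?_⟩
        apply Subtype.coe_injective
        exact hk
      · rintro hx
        obtain ⟨k, hk⟩ := IntermediateField.mem_bot.mp hx
        show T.val x ∈ (⊥ : IntermediateField K Kbar)
        refine IntermediateField.mem_bot.mpr ⟨k, ?_⟩
        show algebraMap K Kbar k = (x : Kbar)
        rw [IsScalarTower.algebraMap_apply K (↥T) Kbar, hk]
        rfl
    have hinfEF : E ⊓ F = (⊥ : IntermediateField K ↥T) := by
      rw [← hcbot, ← hinf]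
      rfl
    -- E ≠ ⊥ and F ≠ ⊥
    have hEbot : E ≠ ⊥ := by
      intro h
      have hEg : Eg = ⊥ := by rw [← hmapE, h, IntermediateField.map_bot]
      have hL'bot : L' = ⊥ := le_bot_iff.mp (hEg ▸ IntermediateField.le_normalClosure L')
      rw [hL'bot, IntermediateField.finrank_bot] at hrank
      exact lt_irrefl 1 hrank
    have hFbot : F ≠ ⊥ := by
      intro h
      have hFg : Fg = ⊥ := by rw [← hmapF, h, IntermediateField.map_bot]
      exact hJne (le_bot_iff.mp (hFg ▸ IntermediateField.le_normalClosure J))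
    -- E ≠ ⊤ and F ≠ ⊤
    have hmaptop : (⊤ : IntermediateField K ↥T).map T.val = T := by
      rw [← AlgHom.fieldRange_eq_map, IntermediateField.fieldRange_val]
    have hEtop : E ≠ ⊤ := by
      intro h
      have hEg : Eg = T := by rw [← hmapE, h, hmaptop]
      have : Fg = ⊥ := by rw [← hinf, hEg, inf_eq_right.mpr hFgT]
      exact hFbot (by rw [hFdef, this, hcbot])
    have hFtop : F ≠ ⊤ := by
      intro h
      have hFg : Fg = T := by rw [← hmapF, h, hmaptop]
      have : Eg = ⊥ := by rw [← hinf, hFg, inf_eq_left.mpr hEgT]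
      exact hEbot (by rw [hEdef, this, hcbot])
    -- pass to fixing subgroups
    have hffE : IntermediateField.fixedField E.fixingSubgroup = E :=
      IsGalois.fixedField_fixingSubgroup E
    have hffF : IntermediateField.fixedField F.fixingSubgroup = F :=
      IsGalois.fixedField_fixingSubgroup F
    have hN1bot : E.fixingSubgroup ≠ ⊥ := by
      intro h
      apply hEtop
      rw [← hffE, h, ← IntermediateField.fixingSubgroup_top,
        IsGalois.fixedField_fixingSubgroup]
    have hN1top : E.fixingSubgroup ≠ ⊤ := by
      intro h
      apply hEbot
      rw [← hffE, h, ← IntermediateField.fixingSubgroup_bot,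
        IsGalois.fixedField_fixingSubgroup]
    have hN2bot : F.fixingSubgroup ≠ ⊥ := by
      intro h
      apply hFtop
      rw [← hffF, h, ← IntermediateField.fixingSubgroup_top,
        IsGalois.fixedField_fixingSubgroup]
    have hN2top : F.fixingSubgroup ≠ ⊤ := by
      intro h
      apply hFbot
      rw [← hffF, h, ← IntermediateField.fixingSubgroup_bot,
        IsGalois.fixedField_fixingSubgroup]
    have h12 : E.fixingSubgroup = F.fixingSubgroup :=
      hfew _ _ inferInstance inferInstance hN1bot hN1top hN2bot hN2top
    have hEF : E = F := by rw [← hffE, ← hffF, h12]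
    apply hEbot
    rw [← hinfEF, hEF, inf_idem]
  refine ⟨main, fun hs => main fun N₁ N₂ h1 _ hb1 ht1 _ _ => ?_⟩
  rcases hs.eq_bot_or_eq_top_of_normal N₁ h1 with h | h
  · exact absurd h hb1
  · exact absurd h ht1
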